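/- arXiv:2103.17130 — 2 statements merged into one kernel-verified Lean document; each statement's English description precedes it below -/
import Mathlib

section
/- With notation as above (ν : X̃ → X a normalization, ρ a lift of φ with ρ bijective), let k = max over x ∈ X of n(x), and let X_k = { x ∈ X : n(x) = k }. Then φ(X_k) ⊆ X_k, and the restriction of φ to X_k is injective whenever φ restricted to X \ Y is injective for a proper closed subvariety Y. -/
open AlgebraicGeometry CategoryTheory

open Limits in
lemma finite_fiber_of_isFinite {X Y : Scheme} (f : X ⟶ Y) [IsFinite f] (y : Y) :
    (f.base ⁻¹' {y}).Finite := by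
  let g := Y.fromSpecResidueField y
  have hrange : Set.range (pullback.fst f g).base = f.base ⁻¹' {y} := by
    rw [Scheme.Pullback.range_fst, Scheme.range_fromSpecResidueField]
  have hsnd : IsFinite (pullback.snd f g) :=
    inferInstance
  have haffP : IsAffine (pullback f g) := isAffine_of_isAffineHom (pullback.snd f g)
  have hfin := IsFinite.finite_app (pullback.snd f g) ⊤ (isAffineOpen_top _)
  set P := pullback f g with hP
  let R := Y.residueField y
  let e : R ⟶ Γ(Spec R, ⊤) := (Scheme.ΓSpecIso R).inv
  let h : R →+* Γ(P, ⊤) := ((pullback.snd f g).appTop.hom : Γ(Spec R, ⊤) →+* Γ(P, ⊤)).comp e.hom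
  have hh : h.Finite := hfin.comp (RingHom.Finite.of_surjective _
    ((ConcreteCategory.bijective_of_isIso e).surjective))
  letI : Algebra R Γ(P, ⊤) := h.toAlgebra
  haveI : Module.Finite R Γ(P, ⊤) := hh
  haveI : IsArtinianRing Γ(P, ⊤) := IsArtinianRing.of_finite R _
  haveI : Finite (PrimeSpectrum Γ(P, ⊤)) := by
    haveI : Finite ({I : Ideal Γ(P, ⊤) | I.IsPrime} : Set _) :=
      (IsArtinianRing.setOfPred_isPrime_finite Γ(P, ⊤)).to_subtype
    exact Finite.of_injective (fun p : PrimeSpectrum Γ(P, ⊤) =>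
      (⟨p.asIdeal, p.isPrime⟩ : ({I : Ideal Γ(P, ⊤) | I.IsPrime} : Set _)))
      (fun a b hab => PrimeSpectrum.ext (congrArg Subtype.val hab))
  haveI : Finite (Spec Γ(P, ⊤)) := inferInstanceAs (Finite (PrimeSpectrum Γ(P, ⊤)))
  haveI : Finite P := Finite.of_injective P.isoSpec.hom.base
    (fun a b hab => by
      have := congrArg P.isoSpec.inv.base hab
      rw [← Scheme.Hom.comp_apply, ← Scheme.Hom.comp_apply, P.isoSpec.hom_inv_id] at this
      simpa using this)
  rw [← hrange]
  exact Set.finite_range _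

/-- With `ν : X̃ → X` a normalization (finite surjective, `X̃` normal),
`ρ` a bijective lift of `φ` (`ν ∘ ρ = φ ∘ ν`), `m` the maximum of the fiber counts
`n(x) = #ν⁻¹(x)` and `X_m = {x | n(x) = m}`, we have `φ(X_m) ⊆ X_m`, and `φ`
restricted to `X_m` is injective whenever `φ` restricted to the complement of a proper
closed subvariety `Y` is injective. -/
theorem normalization_max_fiber_stratum_invariant_and_injective
    (k : Type) [Field k] [IsAlgClosed k] [CharZero k]
    (X Xt : Scheme) [IsIntegral X] [IsIntegral Xt]
    (f : X ⟶ Spec (CommRingCat.of k)) [LocallyOfFiniteType f] [QuasiCompact f]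
    [IsSeparated f]
    (hXtnormal : ∀ x : Xt, IsIntegrallyClosed (Xt.presheaf.stalk x))
    (ν : Xt ⟶ X) [IsFinite ν] (hνsurj : Function.Surjective ν.base)
    (φ : X ⟶ X) (hφ : φ ≫ f = f)
    (ρ : Xt ⟶ Xt) (hcomm : ρ ≫ ν = ν ≫ φ)
    (hρ : Function.Bijective ρ.base)
    (m : ℕ) (hm : IsGreatest (Set.range fun x : X => (ν.base ⁻¹' {x}).ncard) m)
    (Xm : Set X) (hXm : Xm = {x : X | (ν.base ⁻¹' {x}).ncard = m})
    (Y : Set X) (hYcl : IsClosed Y) (hYirr : IsIrreducible Y) (hYne : Y ≠ Set.univ)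
    (hinj : Set.InjOn φ.base Yᶜ) :
    φ.base '' Xm ⊆ Xm ∧ Set.InjOn φ.base Xm := by
  subst hXm
  have hfib : ∀ x : X, (ν.base ⁻¹' {x}).Finite := finite_fiber_of_isFinite ν
  have hne : ∀ x : X, (ν.base ⁻¹' {x}).Nonempty := fun x => hνsurj x
  have hub : ∀ x : X, (ν.base ⁻¹' {x}).ncard ≤ m := fun x => hm.2 ⟨x, rfl⟩
  have hstep : ∀ x : X, ρ.base '' (ν.base ⁻¹' {x}) ⊆ ν.base ⁻¹' {φ.base x} := by
    rintro x _ ⟨t, ht, rfl⟩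
    have hco : ν.base (ρ.base t) = φ.base (ν.base t) := by
      rw [← Scheme.Hom.comp_apply, hcomm, Scheme.Hom.comp_apply]
    simp only [Set.mem_preimage, Set.mem_singleton_iff] at ht ⊢
    rw [hco, ht]
  have himg : ∀ x : X, (ρ.base '' (ν.base ⁻¹' {x})).ncard = (ν.base ⁻¹' {x}).ncard :=
    fun x => Set.ncard_image_of_injective _ hρ.1
  have hmpos : 0 < m := by
    obtain ⟨x0, hx0⟩ := hm.1
    rw [← hx0]
    exact (Set.ncard_pos (hfib x0)).mpr (hne x0)
  constructor
  · rintro _ ⟨x, hx, rfl⟩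
    simp only [Set.mem_setOf_eq] at hx ⊢
    refine le_antisymm (hub _) ?_
    calc m = (ρ.base '' (ν.base ⁻¹' {x})).ncard := by rw [himg, hx]
      _ ≤ (ν.base ⁻¹' {φ.base x}).ncard := Set.ncard_le_ncard (hstep x) (hfib _)
  · intro x1 hx1 x2 hx2 heq
    by_contra hne12
    simp only [Set.mem_setOf_eq] at hx1 hx2
    have hdisj : Disjoint (ν.base ⁻¹' {x1}) (ν.base ⁻¹' {x2}) := by
      rw [Set.disjoint_left]
      intro t ht1 ht2
      simp only [Set.mem_preimage, Set.mem_singleton_iff] at ht1 ht2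
      exact hne12 (ht1 ▸ ht2 ▸ rfl)
    have hdisj2 : Disjoint (ρ.base '' (ν.base ⁻¹' {x1})) (ρ.base '' (ν.base ⁻¹' {x2})) :=
      (Set.disjoint_image_iff hρ.1).mpr hdisj
    have hsub : ρ.base '' (ν.base ⁻¹' {x1}) ∪ ρ.base '' (ν.base ⁻¹' {x2})
        ⊆ ν.base ⁻¹' {φ.base x1} := by
      apply Set.union_subset (hstep x1)
      rw [heq]
      exact hstep x2
    have hcard : m + m ≤ (ν.base ⁻¹' {φ.base x1}).ncard := by
      have := Set.ncard_le_ncard hsub (hfib _)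
      rwa [Set.ncard_union_eq hdisj2 ((hfib x1).image _) ((hfib x2).image _),
        himg, himg, hx1, hx2] at this
    have := le_trans hcard (hub _)
    omega
end

section
/- Let X be a topological space, U and V dense open subsets of X, and φ : X → X a continuous map whose restriction to U is a homeomorphism onto V. If X is Hausdorff and locally compact, then for every open set A ⊆ X, φ(A ∩ U) = φ(A) ∩ V. -/
open Topology Filter


/-- Let `X` be a Hausdorff locally compact space, `U`, `V` dense open
subsets, and `φ : X → X` continuous with `φ(U) = V` and restricting to a homeomorphism
from `U` onto `V`. Then for every open `A ⊆ X`, `φ(A ∩ U) = φ(A) ∩ V`. -/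
theorem image_inter_dense_open_eq
    {X : Type*} [TopologicalSpace X] [T2Space X] [LocallyCompactSpace X]
    (U V : Set X) (hUo : IsOpen U) (hVo : IsOpen V) (hUd : Dense U) (hVd : Dense V)
    (φ : X → X) (hφc : Continuous φ) (hUV : φ '' U = V)
    (hhomeo : ∃ e : U ≃ₜ V, ∀ x : U, (e x : X) = φ x)
    (A : Set X) (hA : IsOpen A) :
    φ '' (A ∩ U) = φ '' A ∩ V := by
  classical
  obtain ⟨e, he⟩ := hhomeo
  ext y
  constructor
  · rintro ⟨x, ⟨hxA, hxU⟩, rfl⟩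
    exact ⟨⟨x, hxA, rfl⟩, hUV ▸ ⟨x, hxU, rfl⟩⟩
  · rintro ⟨⟨x, hxA, rfl⟩, hyV⟩
    have hne : (𝓝[U] x).NeBot := mem_closure_iff_nhdsWithin_neBot.mp (hUd x)
    have h1 : Filter.Tendsto φ (𝓝[U] x) (𝓝 (φ x)) :=
      (hφc.tendsto x).mono_left nhdsWithin_le_nhds
    set k : X → X := fun z => if h : z ∈ V then ((e.symm ⟨z, h⟩ : U) : X) else z with hk
    have hkV : ContinuousOn k V := by
      rw [continuousOn_iff_continuous_restrict]
      have : V.restrict k = fun w : V => ((e.symm w : U) : X) := by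
        funext w
        simp [hk, Set.restrict, w.2]
      rw [show V.domRestrict k = V.restrict k from rfl, this]
      exact continuous_subtype_val.comp e.symm.continuous
    have hkc : ContinuousAt k (φ x) := hkV.continuousAt (hVo.mem_nhds hyV)
    have h2 : Filter.Tendsto (k ∘ φ) (𝓝[U] x) (𝓝 (k (φ x))) := hkc.tendsto.comp h1
    have heq : ∀ z ∈ U, (k ∘ φ) z = z := by
      intro z hz
      have hφz : φ z ∈ V := hUV ▸ ⟨z, hz, rfl⟩
      have hez : e ⟨z, hz⟩ = ⟨φ z, hφz⟩ := Subtype.ext (he ⟨z, hz⟩)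
      simp only [Function.comp, hk, dif_pos hφz, ← hez, e.symm_apply_apply]
    have h3 : Filter.Tendsto id (𝓝[U] x) (𝓝 (k (φ x))) := by
      refine h2.congr' ?_
      filter_upwards [self_mem_nhdsWithin] with z hz using heq z hz
    have h4 : Filter.Tendsto id (𝓝[U] x) (𝓝 x) :=
      tendsto_id.mono_left nhdsWithin_le_nhds
    have hx : k (φ x) = x := tendsto_nhds_unique h3 h4
    have hkU : k (φ x) ∈ U := by
      simp only [hk, dif_pos hyV]
      exact (e.symm ⟨φ x, hyV⟩).2
    rw [hx] at hkU
    exact ⟨x, ⟨hxA, hkU⟩, rfl⟩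
end
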